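/- For all natural numbers p, q, there are isomorphisms of real algebras Cl_{p+2,q}(ℝ) ≅ Cl_{q,p}(ℝ) ⊗_ℝ M₂(ℝ) and Cl_{p,q+2}(ℝ) ≅ Cl_{q,p}(ℝ) ⊗_ℝ ℍ. -/

import Mathlib

open scoped TensorProduct

/-- The real Clifford algebra `Cl_{p,q}(ℝ)` of the quadratic form
`x₁² + … + x_p² − x_{p+1}² − … − x_{p+q}²`. -/
abbrev CliffordPQ (p q : ℕ) : Type :=
  CliffordAlgebra (QuadraticMap.weightedSumSquares ℝ
    (fun i : Fin (p + q) => if (i : ℕ) < p then (1 : ℝ) else -1))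

open CliffordAlgebra QuadraticMap

noncomputable section
namespace ClPer

variable {A : Type*} [Ring A] [Algebra ℝ A] {a b : A} {c : ℝ}

section helpers
variable (ha : a * a = algebraMap ℝ A c) (hb : b * b = algebraMap ℝ A c)
  (hab : a * b = -(b * a))

theorem h1 (ha : a * a = algebraMap ℝ A c) (hab : a * b = -(b * a)) :
    (a * b) * a = -(a * (a * b)) :=
  calc (a*b)*a = -(b*a)*a := by rw [hab]
  _ = -(b*(a*a)) := by rw [neg_mul, mul_assoc]
  _ = -(algebraMap ℝ A c * b) := by rw [ha, Algebra.commutes]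
  _ = -((a*a)*b) := by rw [ha]
  _ = -(a*(a*b)) := by rw [mul_assoc]

theorem hba' (hb : b * b = algebraMap ℝ A c) (hab : a * b = -(b * a)) :
    b * (a * b) = -(a * (b * b)) := by
  have hba : b * a = -(a * b) := by rw [hab, neg_neg]
  rw [← mul_assoc, hba, neg_mul, mul_assoc]

theorem h2 (hb : b * b = algebraMap ℝ A c) (hab : a * b = -(b * a)) :
    (a * b) * b = -(b * (a * b)) := by
  rw [mul_assoc, hba' hb hab, neg_neg]

theorem h3 (ha : a * a = algebraMap ℝ A c) (hb : b * b = algebraMap ℝ A c)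
    (hab : a * b = -(b * a)) :
    (a * b) * (a * b) = algebraMap ℝ A (-(c * c)) :=
  calc (a*b)*(a*b) = a*(b*(a*b)) := by rw [mul_assoc]
  _ = a * -(a*(b*b)) := by rw [hba' hb hab]
  _ = -((a*a)*(b*b)) := by rw [mul_neg, mul_assoc]
  _ = -(algebraMap ℝ A c * algebraMap ℝ A c) := by rw [ha, hb]
  _ = algebraMap ℝ A (-(c*c)) := by rw [← map_mul, ← _root_.map_neg]

theorem h4 (ha : a * a = algebraMap ℝ A c) (hb : b * b = algebraMap ℝ A c)
    (hab : a * b = -(b * a)) {x : A} {u v : ℝ} (hx : x = u • a + v • b) :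
    (a * b) * x + x * (a * b) = 0 := by
  subst hx
  rw [mul_add, add_mul, mul_smul_comm, mul_smul_comm, smul_mul_assoc, smul_mul_assoc,
    h1 ha hab, h2 hb hab]
  simp only [smul_neg]
  abel

end helpers
end ClPer

namespace ClPer

variable {n : ℕ} {c : ℝ} {w : Fin n → ℝ}

local notation "Q2" => CliffordAlgebraQuaternion.Q c c
local notation "Qw" => weightedSumSquares ℝ w

/-- the combined form on `(ℝ×ℝ) × (Fin n → ℝ)` -/
abbrev QQ (c : ℝ) (w : Fin n → ℝ) : QuadraticForm ℝ ((ℝ × ℝ) × (Fin n → ℝ)) :=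
  (CliffordAlgebraQuaternion.Q c c).prod (weightedSumSquares ℝ w)

abbrev Qneg (w : Fin n → ℝ) : QuadraticForm ℝ (Fin n → ℝ) :=
  weightedSumSquares ℝ (fun i => -w i)

theorem Qneg_apply (x : Fin n → ℝ) : Qneg w x = -(Qw x) := by
  simp [weightedSumSquares_apply, neg_smul, Finset.sum_neg_distrib]

-- basic facts in C2
theorem ha2 : ι Q2 (0, 1) * ι Q2 (0, 1) = algebraMap ℝ _ c := by
  rw [ι_sq_scalar]; norm_num [CliffordAlgebraQuaternion.Q_apply]

theorem hb2 : ι Q2 (1, 0) * ι Q2 (1, 0) = algebraMap ℝ _ c := by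
  rw [ι_sq_scalar]; norm_num [CliffordAlgebraQuaternion.Q_apply]

theorem hab2 : ι Q2 (0, 1) * ι Q2 (1, 0) = -(ι Q2 (1, 0) * ι Q2 (0, 1)) := by
  have h := ι_mul_ι_add_swap (Q := Q2) (0, 1) (1, 0)
  have hp : polar (Q2) ((0:ℝ), (1:ℝ)) (1, 0) = 0 := by
    simp [QuadraticMap.polar, CliffordAlgebraQuaternion.Q_apply, Prod.mk_add_mk]
  rw [hp, map_zero] at h
  exact eq_neg_of_add_eq_zero_left h

theorem iota2_decomp (u : ℝ × ℝ) :
    ι Q2 u = u.2 • ι Q2 (0, 1) + u.1 • ι Q2 (1, 0) := by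
  have : u = u.2 • ((0:ℝ), (1:ℝ)) + u.1 • ((1:ℝ), (0:ℝ)) := by
    ext <;> simp
  conv_lhs => rw [this, map_add, _root_.map_smul, _root_.map_smul]

-- facts in Cl(QQ)
theorem hE0 : ι (QQ c w) ((1,0), 0) * ι (QQ c w) ((1,0), 0) = algebraMap ℝ _ c := by
  rw [ι_sq_scalar]; norm_num [QuadraticMap.prod_apply, CliffordAlgebraQuaternion.Q_apply]

theorem hE1 : ι (QQ c w) ((0,1), 0) * ι (QQ c w) ((0,1), 0) = algebraMap ℝ _ c := by
  rw [ι_sq_scalar]; norm_num [QuadraticMap.prod_apply, CliffordAlgebraQuaternion.Q_apply]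

theorem hE01 : ι (QQ c w) ((1,0), 0) * ι (QQ c w) ((0,1), 0)
    = -(ι (QQ c w) ((0,1), 0) * ι (QQ c w) ((1,0), 0)) := by
  have h := ι_mul_ι_add_swap (Q := QQ c w) ((1,0), 0) ((0,1), 0)
  have hp : polar (QQ c w) (((1:ℝ),(0:ℝ)), 0) (((0:ℝ),(1:ℝ)), 0) = 0 := by
    simp only [QuadraticMap.polar_prod, QuadraticMap.polar_zero_left]
    simp [QuadraticMap.polar, CliffordAlgebraQuaternion.Q_apply, Prod.mk_add_mk]
  rw [hp, map_zero] at h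
  exact eq_neg_of_add_eq_zero_left h

theorem anti01 (u : ℝ × ℝ) (b : Fin n → ℝ) :
    ι (QQ c w) (u, 0) * ι (QQ c w) (0, b) = -(ι (QQ c w) (0, b) * ι (QQ c w) (u, 0)) := by
  have h := ι_mul_ι_add_swap (Q := QQ c w) (u, 0) (0, b)
  have hp : polar (QQ c w) (u, 0) (0, b) = 0 := by
    simp only [QuadraticMap.polar_prod, QuadraticMap.polar_zero_left,
      QuadraticMap.polar_zero_right, add_zero]
  rw [hp, map_zero] at h
  exact eq_neg_of_add_eq_zero_left h

theorem iotaQQ_decomp (u : ℝ × ℝ) :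
    ι (QQ c w) (u, 0) = u.1 • ι (QQ c w) ((1,0), 0) + u.2 • ι (QQ c w) ((0,1), 0) := by
  have : ((u, 0) : (ℝ × ℝ) × (Fin n → ℝ)) = u.1 • (((1:ℝ),(0:ℝ)), 0) + u.2 • (((0:ℝ),(1:ℝ)), 0) := by
    refine Prod.ext ?_ (by simp)
    ext <;> simp
  conv_lhs => rw [this, map_add, _root_.map_smul, _root_.map_smul]

end ClPer

namespace ClPer

variable {n : ℕ} {c : ℝ} {w : Fin n → ℝ}

local notation "Q2" => CliffordAlgebraQuaternion.Q c c
local notation "Qw" => weightedSumSquares ℝ w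
local notation "ω2" => ι (CliffordAlgebraQuaternion.Q c c) (0,1) * ι (CliffordAlgebraQuaternion.Q c c) (1,0)
local notation "E0" => ι (QQ c w) ((1,0), 0)
local notation "E1" => ι (QQ c w) ((0,1), 0)

theorem omega2_sq : ω2 * ω2 = algebraMap ℝ _ (-(c*c)) := h3 ha2 hb2 hab2

theorem omega2_anti (u : ℝ × ℝ) : ω2 * ι Q2 u + ι Q2 u * ω2 = 0 :=
  h4 ha2 hb2 hab2 (iota2_decomp u)

theorem Omega_sq : (E0 * E1) * (E0 * E1) = algebraMap ℝ _ (-(c*c)) := h3 hE0 hE1 hE01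

theorem Omega_anti (u : ℝ × ℝ) :
    (E0 * E1) * ι (QQ c w) (u, 0) + ι (QQ c w) (u, 0) * (E0 * E1) = 0 :=
  h4 hE0 hE1 hE01 (iotaQQ_decomp u)

theorem Omega_comm_X (b : Fin n → ℝ) :
    (E0 * E1) * ι (QQ c w) (0, b) = ι (QQ c w) (0, b) * (E0 * E1) := by
  calc (E0 * E1) * ι (QQ c w) (0, b) = E0 * (E1 * ι (QQ c w) (0, b)) := mul_assoc _ _ _
  _ = E0 * -(ι (QQ c w) (0, b) * E1) := by rw [anti01 (0,1) b]
  _ = -((E0 * ι (QQ c w) (0, b)) * E1) := by rw [mul_neg, mul_assoc]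
  _ = -(-(ι (QQ c w) (0, b) * E0) * E1) := by rw [anti01 (1,0) b]
  _ = ι (QQ c w) (0, b) * (E0 * E1) := by rw [neg_mul, neg_neg, mul_assoc]

/-- squares add for anticommuting elements -/
theorem sq_add {T : Type*} [Ring T] [Algebra ℝ T] {X Y : T} {r s : ℝ}
    (hX : X * X = algebraMap ℝ T r) (hY : Y * Y = algebraMap ℝ T s)
    (hXY : X * Y + Y * X = 0) : (X + Y) * (X + Y) = algebraMap ℝ T (r + s) := by
  have : (X + Y) * (X + Y) = (X * X + Y * Y) + (X * Y + Y * X) := by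
    rw [add_mul, mul_add, mul_add]; abel
  rw [this, hXY, add_zero, hX, hY, map_add]

/-- the forward linear map -/
def phi (c : ℝ) (w : Fin n → ℝ) :
    ((ℝ × ℝ) × (Fin n → ℝ)) →ₗ[ℝ]
      (CliffordAlgebra (Qneg w) ⊗[ℝ] CliffordAlgebra (CliffordAlgebraQuaternion.Q c c)) :=
  ((TensorProduct.mk ℝ _ _).flip
      (ι (CliffordAlgebraQuaternion.Q c c) (0,1) * ι (CliffordAlgebraQuaternion.Q c c) (1,0))).comp
      ((ι (Qneg w)).comp (LinearMap.snd ℝ (ℝ × ℝ) (Fin n → ℝ)))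
    + (Algebra.TensorProduct.includeRight.toLinearMap.comp
      ((ι (CliffordAlgebraQuaternion.Q c c)).comp (LinearMap.fst ℝ (ℝ × ℝ) (Fin n → ℝ))))

theorem phi_apply (v : (ℝ × ℝ) × (Fin n → ℝ)) :
    phi c w v = ι (Qneg w) v.2 ⊗ₜ[ℝ] ω2 + 1 ⊗ₜ[ℝ] ι Q2 v.1 := rfl

theorem tmul_algebraMap (r s : ℝ) :
    (algebraMap ℝ (CliffordAlgebra (Qneg w)) r) ⊗ₜ[ℝ]
      (algebraMap ℝ (CliffordAlgebra (CliffordAlgebraQuaternion.Q c c)) s)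
    = algebraMap ℝ _ (r * s) := by
  rw [map_mul, Algebra.TensorProduct.algebraMap_apply,
    ← Algebra.TensorProduct.includeRight.commutes s,
    Algebra.TensorProduct.includeRight_apply, Algebra.TensorProduct.tmul_mul_tmul,
    mul_one, one_mul]

theorem phi_sq (hc : c * c = 1) (v : (ℝ × ℝ) × (Fin n → ℝ)) :
    phi c w v * phi c w v = algebraMap ℝ _ (QQ c w v) := by
  rw [phi_apply]
  have hX : (ι (Qneg w) v.2 ⊗ₜ[ℝ] ω2) * (ι (Qneg w) v.2 ⊗ₜ[ℝ] ω2)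
      = algebraMap ℝ _ (Qneg w v.2 * -1) := by
    rw [Algebra.TensorProduct.tmul_mul_tmul, ι_sq_scalar, omega2_sq, hc, tmul_algebraMap]
  have hY : ((1 : CliffordAlgebra (Qneg w)) ⊗ₜ[ℝ] ι Q2 v.1) * (1 ⊗ₜ[ℝ] ι Q2 v.1)
      = algebraMap ℝ _ (Q2 v.1) := by
    rw [Algebra.TensorProduct.tmul_mul_tmul, one_mul, ι_sq_scalar,
      ← Algebra.TensorProduct.includeRight_apply, Algebra.TensorProduct.includeRight.commutes]
  have hXY : (ι (Qneg w) v.2 ⊗ₜ[ℝ] ω2) * (1 ⊗ₜ[ℝ] ι Q2 v.1)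
      + ((1 : CliffordAlgebra (Qneg w)) ⊗ₜ[ℝ] ι Q2 v.1) * (ι (Qneg w) v.2 ⊗ₜ[ℝ] ω2) = 0 := by
    rw [Algebra.TensorProduct.tmul_mul_tmul, Algebra.TensorProduct.tmul_mul_tmul, mul_one,
      one_mul, ← TensorProduct.tmul_add, omega2_anti v.1, TensorProduct.tmul_zero]
  rw [sq_add hX hY hXY]
  congr 1
  rw [Qneg_apply, QuadraticMap.prod_apply]
  ring

end ClPer

namespace ClPer

theorem h5 {A : Type*} [Ring A] [Algebra ℝ A] {a b : A} {c : ℝ}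
    (ha : a * a = algebraMap ℝ A c) (hb : b * b = algebraMap ℝ A c) :
    (a * b) * (b * a) = algebraMap ℝ A (c * c) := by
  calc (a * b) * (b * a) = a * ((b * b) * a) := by rw [mul_assoc, ← mul_assoc b b a]
  _ = a * (algebraMap ℝ A c * a) := by rw [hb]
  _ = (a * algebraMap ℝ A c) * a := by rw [mul_assoc]
  _ = (algebraMap ℝ A c * a) * a := by rw [← Algebra.commutes c a]
  _ = algebraMap ℝ A c * (a * a) := by rw [mul_assoc]
  _ = algebraMap ℝ A (c * c) := by rw [ha, ← map_mul]

variable {n : ℕ} {c : ℝ} {w : Fin n → ℝ}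

local notation "Q2" => CliffordAlgebraQuaternion.Q c c
local notation "Qw" => weightedSumSquares ℝ w
local notation "ω2" => ι (CliffordAlgebraQuaternion.Q c c) (0,1) * ι (CliffordAlgebraQuaternion.Q c c) (1,0)
local notation "E0" => ι (QQ c w) ((1,0), 0)
local notation "E1" => ι (QQ c w) ((0,1), 0)

/-- the forward algebra map -/
def F (c : ℝ) (w : Fin n → ℝ) (hc : c * c = 1) :
    CliffordAlgebra (QQ c w) →ₐ[ℝ]
      (CliffordAlgebra (Qneg w) ⊗[ℝ] CliffordAlgebra (CliffordAlgebraQuaternion.Q c c)) :=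
  CliffordAlgebra.lift _ ⟨phi c w, phi_sq hc⟩

theorem F_ι (hc : c * c = 1) (v : (ℝ × ℝ) × (Fin n → ℝ)) :
    F c w hc (ι (QQ c w) v) = ι (Qneg w) v.2 ⊗ₜ[ℝ] ω2 + 1 ⊗ₜ[ℝ] ι Q2 v.1 := by
  rw [F, CliffordAlgebra.lift_ι_apply, phi_apply]

/-- inclusion of the 2-dim part -/
def isoInl (c : ℝ) (w : Fin n → ℝ) : (CliffordAlgebraQuaternion.Q c c) →qᵢ QQ c w :=
  { LinearMap.inl ℝ (ℝ × ℝ) (Fin n → ℝ) with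
    map_app' := fun u => by
      simp [QuadraticMap.prod_apply, weightedSumSquares_apply] }

def g2 (c : ℝ) (w : Fin n → ℝ) :
    CliffordAlgebra (CliffordAlgebraQuaternion.Q c c) →ₐ[ℝ] CliffordAlgebra (QQ c w) :=
  CliffordAlgebra.map (isoInl c w)

theorem g2_ι (u : ℝ × ℝ) : g2 c w (ι Q2 u) = ι (QQ c w) (u, 0) :=
  CliffordAlgebra.map_apply_ι _ _

def psi (c : ℝ) (w : Fin n → ℝ) : (Fin n → ℝ) →ₗ[ℝ] CliffordAlgebra (QQ c w) :=
  (LinearMap.mulRight ℝ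
    (ι (QQ c w) ((1,0), 0) * ι (QQ c w) ((0,1), 0))).comp
    ((ι (QQ c w)).comp (LinearMap.inr ℝ (ℝ × ℝ) (Fin n → ℝ)))

theorem psi_apply (b : Fin n → ℝ) :
    psi c w b = ι (QQ c w) (0, b) * (E0 * E1) := rfl

theorem psi_sq (hc : c * c = 1) (b : Fin n → ℝ) :
    psi c w b * psi c w b = algebraMap ℝ _ (Qneg w b) := by
  rw [psi_apply]
  calc (ι (QQ c w) (0, b) * (E0 * E1)) * (ι (QQ c w) (0, b) * (E0 * E1))
      = ι (QQ c w) (0, b) * (((E0 * E1) * ι (QQ c w) (0, b)) * (E0 * E1)) := by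
        simp only [mul_assoc]
  _ = ι (QQ c w) (0, b) * ((ι (QQ c w) (0, b) * (E0 * E1)) * (E0 * E1)) := by
        rw [Omega_comm_X]
  _ = (ι (QQ c w) (0, b) * ι (QQ c w) (0, b)) * ((E0 * E1) * (E0 * E1)) := by
        simp only [mul_assoc]
  _ = algebraMap ℝ _ (QQ c w (0, b)) * algebraMap ℝ _ (-(c * c)) := by
        rw [ι_sq_scalar, Omega_sq]
  _ = algebraMap ℝ _ (Qneg w b) := by
        rw [← map_mul]
        congr 1
        rw [hc, Qneg_apply, QuadraticMap.prod_apply]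
        simp [weightedSumSquares_apply]

def g1 (c : ℝ) (w : Fin n → ℝ) (hc : c * c = 1) :
    CliffordAlgebra (Qneg w) →ₐ[ℝ] CliffordAlgebra (QQ c w) :=
  CliffordAlgebra.lift _ ⟨psi c w, psi_sq hc⟩

theorem g1_ι (hc : c * c = 1) (b : Fin n → ℝ) :
    g1 c w hc (ι (Qneg w) b) = ι (QQ c w) (0, b) * (E0 * E1) := by
  rw [g1, CliffordAlgebra.lift_ι_apply, psi_apply]

theorem g_comm (hc : c * c = 1) (x : CliffordAlgebra (Qneg w))
    (y : CliffordAlgebra (CliffordAlgebraQuaternion.Q c c)) :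
    Commute (g1 c w hc x) (g2 c w y) := by
  induction y using CliffordAlgebra.induction with
  | algebraMap r => rw [AlgHom.commutes]; exact (Algebra.commutes r _).symm
  | add a b ha hb => rw [map_add]; exact Commute.add_right ha hb
  | mul a b ha hb => rw [map_mul]; exact Commute.mul_right ha hb
  | ι u =>
    rw [g2_ι]
    induction x using CliffordAlgebra.induction with
    | algebraMap r => rw [AlgHom.commutes]; exact Algebra.commutes r _
    | add a b ha hb => rw [map_add]; exact Commute.add_left ha hb
    | mul a b ha hb => rw [map_mul]; exact Commute.mul_left ha hb
    | ι b =>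
      rw [g1_ι]
      have hO : (E0 * E1) * ι (QQ c w) (u, 0) = -(ι (QQ c w) (u, 0) * (E0 * E1)) :=
        eq_neg_of_add_eq_zero_left (Omega_anti u)
      have hX : ι (QQ c w) (0, b) * ι (QQ c w) (u, 0)
          = -(ι (QQ c w) (u, 0) * ι (QQ c w) (0, b)) := by
        have := anti01 (c := c) (w := w) u b
        rw [eq_neg_of_add_eq_zero_left (by rw [this]; abel : ι (QQ c w) (0, b) * ι (QQ c w) (u, 0)
          + ι (QQ c w) (u, 0) * ι (QQ c w) (0, b) = 0)]
      show (ι (QQ c w) (0, b) * (E0 * E1)) * ι (QQ c w) (u, 0)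
          = ι (QQ c w) (u, 0) * (ι (QQ c w) (0, b) * (E0 * E1))
      rw [mul_assoc, hO, mul_neg, ← mul_assoc, hX, neg_mul, neg_neg, mul_assoc]

def G (c : ℝ) (w : Fin n → ℝ) (hc : c * c = 1) :
    (CliffordAlgebra (Qneg w) ⊗[ℝ] CliffordAlgebra (CliffordAlgebraQuaternion.Q c c)) →ₐ[ℝ]
      CliffordAlgebra (QQ c w) :=
  Algebra.TensorProduct.lift (g1 c w hc) (g2 c w) (g_comm hc)

end ClPer

namespace ClPer

variable {n : ℕ} {c : ℝ} {w : Fin n → ℝ}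

local notation "Q2" => CliffordAlgebraQuaternion.Q c c
local notation "ω2" => ι (CliffordAlgebraQuaternion.Q c c) (0,1) * ι (CliffordAlgebraQuaternion.Q c c) (1,0)
local notation "E0" => ι (QQ c w) ((1,0), 0)
local notation "E1" => ι (QQ c w) ((0,1), 0)

theorem comp_GF (hc : c * c = 1) :
    (G c w hc).comp (F c w hc) = AlgHom.id ℝ (CliffordAlgebra (QQ c w)) := by
  apply CliffordAlgebra.hom_ext
  apply LinearMap.ext
  intro v
  simp only [LinearMap.comp_apply, AlgHom.toLinearMap_apply, AlgHom.coe_id, id_eq,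
    AlgHom.comp_apply]
  rw [F_ι, G, map_add, Algebra.TensorProduct.lift_tmul, Algebra.TensorProduct.lift_tmul,
    map_one, one_mul, g1_ι, map_mul, g2_ι, g2_ι, g2_ι]
  have key : (E0 * E1) * (ι (QQ c w) ((0,1), 0) * ι (QQ c w) ((1,0), 0)) = 1 := by
    rw [h5 hE0 hE1, hc, map_one]
  rw [mul_assoc, key, mul_one, ← map_add]
  congr 1
  exact Prod.ext (by simp) (by simp)

theorem comp_FG (hc : c * c = 1) :
    (F c w hc).comp (G c w hc) = AlgHom.id ℝ _ := by
  apply Algebra.TensorProduct.ext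
  · apply CliffordAlgebra.hom_ext
    apply LinearMap.ext
    intro b
    simp only [LinearMap.comp_apply, AlgHom.toLinearMap_apply, AlgHom.comp_apply,
      AlgHom.coe_id, id_eq, Algebra.TensorProduct.includeLeft_apply]
    rw [G, Algebra.TensorProduct.lift_tmul, map_one, mul_one, g1_ι, map_mul, map_mul,
      F_ι, F_ι, F_ι]
    simp only [map_zero, TensorProduct.tmul_zero, TensorProduct.zero_tmul, add_zero, zero_add]
    rw [Algebra.TensorProduct.tmul_mul_tmul, Algebra.TensorProduct.tmul_mul_tmul,
      mul_one, mul_one]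
    have key : ω2 * (ι Q2 (1,0) * ι Q2 (0,1)) = 1 := by
      rw [h5 ha2 hb2, hc, map_one]
    rw [key]
  · apply CliffordAlgebra.hom_ext
    apply LinearMap.ext
    intro u
    simp only [LinearMap.comp_apply, AlgHom.toLinearMap_apply, AlgHom.comp_apply,
      AlgHom.coe_id, id_eq, Algebra.TensorProduct.includeRight_apply,
      AlgHom.restrictScalars_apply]
    rw [G, Algebra.TensorProduct.lift_tmul, map_one, one_mul, g2_ι, F_ι]
    simp only [map_zero, TensorProduct.zero_tmul, zero_add]

/-- The core periodicity equivalence. -/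
def equivCore (c : ℝ) (w : Fin n → ℝ) (hc : c * c = 1) :
    CliffordAlgebra (QQ c w) ≃ₐ[ℝ]
      (CliffordAlgebra (Qneg w) ⊗[ℝ] CliffordAlgebra (CliffordAlgebraQuaternion.Q c c)) :=
  AlgEquiv.ofAlgHom (F c w hc) (G c w hc) (comp_FG hc) (comp_GF hc)

end ClPer

namespace ClPer

/-- reindexing a weighted sum of squares along an equivalence of index types -/
def reindexIso {m m' : ℕ} (w : Fin m → ℝ) (w' : Fin m' → ℝ) (e : Fin m ≃ Fin m')
    (h : ∀ i, w' (e i) = w i) :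
    (weightedSumSquares ℝ w).IsometryEquiv (weightedSumSquares ℝ w') where
  toLinearEquiv := LinearEquiv.funCongrLeft ℝ ℝ e.symm
  map_app' v := by
    rw [weightedSumSquares_apply, weightedSumSquares_apply]
    refine Fintype.sum_equiv e.symm _ _ (fun i' => ?_)
    have hw : w' i' = w (e.symm i') := by rw [← h (e.symm i'), e.apply_symm_apply]
    rw [hw]; rfl

def splitL (n : ℕ) : (Fin (n+2) → ℝ) ≃ₗ[ℝ] (ℝ × ℝ) × (Fin n → ℝ) :=
  ((LinearEquiv.funCongrLeft ℝ ℝ (finSumFinEquiv (m := n) (n := 2))).trans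
    ((LinearEquiv.sumArrowLequivProdArrow (Fin n) (Fin 2) ℝ ℝ).trans
      ((LinearEquiv.refl ℝ (Fin n → ℝ)).prodCongr (LinearEquiv.finTwoArrow ℝ ℝ)))).trans
    (LinearEquiv.prodComm ℝ (Fin n → ℝ) (ℝ × ℝ))

theorem splitL_apply {n : ℕ} (v : Fin (n+2) → ℝ) :
    splitL n v = ((v (Fin.natAdd n 0), v (Fin.natAdd n 1)), fun j => v (Fin.castAdd 2 j)) := rfl

/-- the splitting isometry -/
def splitIso {n : ℕ} (c : ℝ) (w : Fin n → ℝ) (W : Fin (n+2) → ℝ)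
    (h0 : W (Fin.natAdd n 0) = c) (h1 : W (Fin.natAdd n 1) = c)
    (h2 : ∀ j, W (Fin.castAdd 2 j) = w j) :
    (weightedSumSquares ℝ W).IsometryEquiv (QQ c w) where
  toLinearEquiv := splitL n
  map_app' v := by
    show QQ c w (splitL n v) = _
    rw [splitL_apply, QuadraticMap.prod_apply, CliffordAlgebraQuaternion.Q_apply,
      weightedSumSquares_apply, weightedSumSquares_apply]
    rw [← Equiv.sum_comp finSumFinEquiv (fun i => W i • (v i * v i)), Fintype.sum_sum_type]
    simp only [finSumFinEquiv_apply_left, finSumFinEquiv_apply_right, h2, Fin.sum_univ_two,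
      h0, h1, smul_eq_mul]
    ring

end ClPer

namespace ClPer

open Matrix in
/-- quaternion basis inside 2×2 matrices, for `c₁ = c₂ = 1` -/
def quatBasisM2 : QuaternionAlgebra.Basis (Matrix (Fin 2) (Fin 2) ℝ) (1:ℝ) (0:ℝ) (1:ℝ) where
  i := !![1, 0; 0, -1]
  j := !![0, 1; 1, 0]
  k := !![0, 1; -1, 0]
  i_mul_i := by
    ext i j
    fin_cases i <;> fin_cases j <;>
      simp [Matrix.mul_apply, Fin.sum_univ_two, Matrix.one_apply]
  j_mul_j := by
    ext i j
    fin_cases i <;> fin_cases j <;>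
      simp [Matrix.mul_apply, Fin.sum_univ_two, Matrix.one_apply]
  i_mul_j := by
    ext i j
    fin_cases i <;> fin_cases j <;>
      simp [Matrix.mul_apply, Fin.sum_univ_two]
  j_mul_i := by
    ext i j
    fin_cases i <;> fin_cases j <;>
      simp [Matrix.mul_apply, Fin.sum_univ_two]

def quatToM2 : QuaternionAlgebra ℝ 1 0 1 →ₐ[ℝ] Matrix (Fin 2) (Fin 2) ℝ :=
  quatBasisM2.liftHom

open Matrix in
theorem quatToM2_apply (x : QuaternionAlgebra ℝ 1 0 1) :
    quatToM2 x = !![x.re + x.imI, x.imJ + x.imK; x.imJ - x.imK, x.re - x.imI] := by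
  show quatBasisM2.lift x = _
  simp only [QuaternionAlgebra.Basis.lift]
  ext i j
  fin_cases i <;> fin_cases j <;>
    simp [quatBasisM2, Matrix.algebraMap_eq_diagonal, Matrix.diagonal_apply] <;> ring

theorem quatToM2_bij : Function.Bijective quatToM2 := by
  constructor
  · intro x y hxy
    rw [quatToM2_apply, quatToM2_apply] at hxy
    have h00 := congrFun (congrFun hxy 0) 0
    have h01 := congrFun (congrFun hxy 0) 1
    have h10 := congrFun (congrFun hxy 1) 0
    have h11 := congrFun (congrFun hxy 1) 1
    simp at h00 h01 h10 h11
    ext <;> linarith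
  · intro m
    refine ⟨⟨(m 0 0 + m 1 1)/2, (m 0 0 - m 1 1)/2, (m 0 1 + m 1 0)/2, (m 0 1 - m 1 0)/2⟩, ?_⟩
    rw [quatToM2_apply]
    ext i j
    fin_cases i <;> fin_cases j <;> simp <;> ring

/-- `ℍ[ℝ,1,1]` is the 2×2 real matrix algebra. -/
def quatEquivM2 : QuaternionAlgebra ℝ 1 0 1 ≃ₐ[ℝ] Matrix (Fin 2) (Fin 2) ℝ :=
  AlgEquiv.ofBijective quatToM2 quatToM2_bij

end ClPer

namespace ClPer

def permCase1 (p q : ℕ) : Fin ((p+2)+q) ≃ Fin ((p+q)+2) where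
  toFun i := ⟨if (i:ℕ) < p then i else if (i:ℕ) < p+2 then p+q+((i:ℕ)-p) else (i:ℕ)-2,
    by have hi := i.isLt; split_ifs <;> omega⟩
  invFun k := ⟨if (k:ℕ) < p then k else if (k:ℕ) < p+q then (k:ℕ)+2 else p+((k:ℕ)-(p+q)),
    by have hk := k.isLt; split_ifs <;> omega⟩
  left_inv i := by
    have hi := i.isLt
    apply Fin.ext
    simp only
    split_ifs <;> omega
  right_inv k := by
    have hk := k.isLt
    apply Fin.ext
    simp only
    split_ifs <;> omega

def permSwap (p q : ℕ) : Fin (p+q) ≃ Fin (q+p) where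
  toFun i := ⟨if (i:ℕ) < p then q+(i:ℕ) else (i:ℕ)-p,
    by have hi := i.isLt; split_ifs <;> omega⟩
  invFun k := ⟨if (k:ℕ) < q then (k:ℕ)+p else (k:ℕ)-q,
    by have hk := k.isLt; split_ifs <;> omega⟩
  left_inv i := by
    have hi := i.isLt
    apply Fin.ext
    simp only
    split_ifs <;> omega
  right_inv k := by
    have hk := k.isLt
    apply Fin.ext
    simp only
    split_ifs <;> omega

end ClPer

theorem clifford_plus_two_iso' (p q : ℕ) :
    Nonempty (CliffordAlgebra (QuadraticMap.weightedSumSquares ℝ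
        (fun i : Fin ((p+2) + q) => if (i : ℕ) < p+2 then (1 : ℝ) else -1)) ≃ₐ[ℝ]
      (CliffordAlgebra (QuadraticMap.weightedSumSquares ℝ
        (fun i : Fin (q + p) => if (i : ℕ) < q then (1 : ℝ) else -1))
          ⊗[ℝ] Matrix (Fin 2) (Fin 2) ℝ)) ∧
    Nonempty (CliffordAlgebra (QuadraticMap.weightedSumSquares ℝ
        (fun i : Fin (p + (q+2)) => if (i : ℕ) < p then (1 : ℝ) else -1)) ≃ₐ[ℝ]
      (CliffordAlgebra (QuadraticMap.weightedSumSquares ℝ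
        (fun i : Fin (q + p) => if (i : ℕ) < q then (1 : ℝ) else -1))
          ⊗[ℝ] Quaternion ℝ)) := by
  open ClPer in
  constructor
  · refine ⟨?_⟩
    refine (CliffordAlgebra.equivOfIsometry (reindexIso _
        (fun i : Fin ((p+q)+2) => if (i:ℕ) < p ∨ p+q ≤ (i:ℕ) then (1:ℝ) else -1)
        (permCase1 p q) ?_)).trans <|
      (CliffordAlgebra.equivOfIsometry (splitIso 1
        (fun j : Fin (p+q) => if (j:ℕ) < p then (1:ℝ) else -1) _ ?_ ?_ ?_)).trans <|
      (equivCore 1 _ (by norm_num)).trans <|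
      Algebra.TensorProduct.congr
        (CliffordAlgebra.equivOfIsometry (reindexIso _
          (fun i : Fin (q+p) => if (i:ℕ) < q then (1:ℝ) else -1) (permSwap p q) ?_))
        (CliffordAlgebraQuaternion.equiv.trans quatEquivM2)
    · intro i
      have hi := i.isLt
      simp only [permCase1, Equiv.coe_fn_mk]
      split_ifs <;> first | rfl | omega
    · simp only [Fin.natAdd, Fin.val_zero]
      split_ifs <;> first | rfl | omega
    · simp only [Fin.natAdd, Fin.val_one]
      split_ifs <;> first | rfl | omega
    · intro j
      have hj := j.isLt
      simp only [Fin.castAdd, Fin.castLE, Fin.coe_castAdd]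
      split_ifs <;> first | rfl | omega
    · intro i
      have hi := i.isLt
      simp only [permSwap, Equiv.coe_fn_mk]
      split_ifs <;> first | rfl | (exfalso; omega) | norm_num
  · refine ⟨?_⟩
    refine (CliffordAlgebra.equivOfIsometry (reindexIso _
        (fun i : Fin ((p+q)+2) => if (i:ℕ) < p then (1:ℝ) else -1)
        (finCongr (by omega)) ?_)).trans <|
      (CliffordAlgebra.equivOfIsometry (splitIso (-1)
        (fun j : Fin (p+q) => if (j:ℕ) < p then (1:ℝ) else -1) _ ?_ ?_ ?_)).trans <|
      (equivCore (-1) _ (by norm_num)).trans <|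
      Algebra.TensorProduct.congr
        (CliffordAlgebra.equivOfIsometry (reindexIso _
          (fun i : Fin (q+p) => if (i:ℕ) < q then (1:ℝ) else -1) (permSwap p q) ?_))
        (CliffordAlgebraQuaternion.equiv.trans
          (AlgEquiv.refl (R := ℝ) (A₁ := QuaternionAlgebra ℝ (-1) 0 (-1)) :
            QuaternionAlgebra ℝ (-1) 0 (-1) ≃ₐ[ℝ] Quaternion ℝ))
    · intro i
      simp only [finCongr_apply, Fin.coe_cast]
    · simp only [Fin.natAdd, Fin.val_zero]
      split_ifs <;> first | rfl | omega
    · simp only [Fin.natAdd, Fin.val_one]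
      split_ifs <;> first | rfl | omega
    · intro j
      simp only [Fin.coe_castAdd]
    · intro i
      have hi := i.isLt
      simp only [permSwap, Equiv.coe_fn_mk]
      split_ifs <;> first | rfl | (exfalso; omega) | norm_num

theorem clifford_plus_two_iso (p q : ℕ) :
    Nonempty (CliffordPQ (p + 2) q ≃ₐ[ℝ]
      (CliffordPQ q p ⊗[ℝ] Matrix (Fin 2) (Fin 2) ℝ)) ∧
    Nonempty (CliffordPQ p (q + 2) ≃ₐ[ℝ]
      (CliffordPQ q p ⊗[ℝ] Quaternion ℝ)) := by
  exact clifford_plus_two_iso' p q
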